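/- For each integer i ≥ 1, the function f^i(t) = cosh(√t/2)·(2 sinh(√t/2)/√t)^{2i-1} (extended analytically at t=0) satisfies the functional equation 4(i+j-1) t^{i+j-2} f^{i+j-1}(t) + (i+j) t^{i+j-1} f^{i+j}(t) = 4 d/dt ( t^{i+j-1} f^i(t) f^j(t) ) for all integers i, j ≥ 1. -/

import Mathlib

noncomputable def fgen (i : ℕ) (t : ℝ) : ℝ :=
  Real.cosh (Real.sqrt t / 2) * (2 * Real.sinh (Real.sqrt t / 2) / Real.sqrt t) ^ (2 * i - 1)

/-- the functions `f^i` satisfy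
`4(i+j-1) t^{i+j-2} f^{i+j-1} + (i+j) t^{i+j-1} f^{i+j} = 4 d/dt (t^{i+j-1} f^i f^j)`. -/
theorem stmt0 (i j : ℕ) (hi : 1 ≤ i) (hj : 1 ≤ j) (t : ℝ) (ht : 0 < t) :
    HasDerivAt (fun s : ℝ => s ^ (i + j - 1) * fgen i s * fgen j s)
      ((4 * ((i : ℝ) + j - 1) * t ^ (i + j - 2) * fgen (i + j - 1) t
        + ((i : ℝ) + j) * t ^ (i + j - 1) * fgen (i + j) t) / 4) t := by
  obtain ⟨a, rfl⟩ := Nat.exists_eq_add_of_le hi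
  obtain ⟨b, rfl⟩ := Nat.exists_eq_add_of_le hj
  set u := Real.sqrt t with hu
  have hupos : 0 < u := Real.sqrt_pos.mpr ht
  have hut : u ^ 2 = t := Real.sq_sqrt ht.le
  have hs : HasDerivAt (fun s : ℝ => Real.sqrt s / 2) (1 / (2 * u) / 2) t :=
    (Real.hasDerivAt_sqrt ht.ne').div_const 2
  have hc : HasDerivAt (fun s : ℝ => Real.cosh (Real.sqrt s / 2))
      (Real.sinh (u / 2) * (1 / (2 * u) / 2)) t :=
    (Real.hasDerivAt_cosh _).comp t hs
  have hsh : HasDerivAt (fun s : ℝ => 2 * Real.sinh (Real.sqrt s / 2))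
      (2 * (Real.cosh (u / 2) * (1 / (2 * u) / 2))) t :=
    ((Real.hasDerivAt_sinh _).comp t hs).const_mul 2
  have hg := (hc.pow 2).mul (hsh.pow (2 * a + 2 * b + 2))
  have hev : (fun s : ℝ => s ^ (1 + a + (1 + b) - 1) * fgen (1 + a) s * fgen (1 + b) s)
      =ᶠ[nhds t] (fun s : ℝ => Real.cosh (Real.sqrt s / 2) ^ 2 *
        (2 * Real.sinh (Real.sqrt s / 2)) ^ (2 * a + 2 * b + 2)) := by
    filter_upwards [Ioi_mem_nhds ht] with s hs0
    have hv : (0 : ℝ) < Real.sqrt s := Real.sqrt_pos.mpr hs0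
    have hvs : Real.sqrt s ^ 2 = s := Real.sq_sqrt hs0.le
    simp only [fgen]
    rw [show 2 * (1 + a) - 1 = 2 * a + 1 by omega, show 2 * (1 + b) - 1 = 2 * b + 1 by omega,
      show 1 + a + (1 + b) - 1 = a + b + 1 by omega, ← hvs]
    simp only [Real.sqrt_sq hv.le, div_pow, mul_pow]
    field_simp
    ring
  refine (HasDerivAt.congr_of_eventuallyEq ?_ hev)
  convert hg using 1
  on_goal 1 => exact rfl
  on_goal 1 => rfl
  simp only [fgen, ← hu]
  rw [show 1 + a + (1 + b) - 1 = a + b + 1 by omega, show 1 + a + (1 + b) - 2 = a + b by omega,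
    show 1 + a + (1 + b) = a + b + 2 by omega, show 2 * (a + b + 1) - 1 = 2 * a + 2 * b + 1 by omega,
    show 2 * (a + b + 2) - 1 = 2 * a + 2 * b + 3 by omega,
    show 2 * a + 2 * b + 2 - 1 = 2 * a + 2 * b + 1 by omega, ← hut]
  push_cast
  simp only [Pi.pow_apply, Real.sqrt_sq hupos.le, div_pow, mul_pow]
  rw [Real.cosh_sq]
  field_simp
  ring
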